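/- Let X be a real vector space, M ⊆ X a nonempty affine subspace, S a generalized semispace generated by M, a ∈ M, and S⁻ := {2a − y : y ∈ S}. Then S⁻ is also a generalized semispace generated by M, and X is the union X = S⁻ ∪ M ∪ S with the three sets S⁻, M, S pairwise disjoint. -/

import Mathlib

/-- `S` is a generalized semispace generated by the set `M`: a convex set disjoint from `M`
that is maximal with respect to inclusion among convex subsets disjoint from `M`. -/
def IsGenSemispace {X : Type*} [AddCommGroup X] [Module ℝ X] (M S : Set X) : Prop :=
  Convex ℝ S ∧ S ∩ M = ∅ ∧
    ∀ C : Set X, Convex ℝ C → C ∩ M = ∅ → S ⊆ C → C = S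

theorem genSemispace_reflection {X : Type*} [AddCommGroup X] [Module ℝ X]
    (M : AffineSubspace ℝ X) (hM : (M : Set X).Nonempty)
    (S : Set X) (hS : IsGenSemispace (M : Set X) S)
    (a : X) (ha : a ∈ M)
    (Sneg : Set X) (hSneg : Sneg = {z : X | ∃ y ∈ S, z = (2 : ℝ) • a - y}) :
    IsGenSemispace (M : Set X) Sneg ∧
      Sneg ∪ (M : Set X) ∪ S = Set.univ ∧
      Sneg ∩ (M : Set X) = ∅ ∧ Sneg ∩ S = ∅ ∧ (M : Set X) ∩ S = ∅ := by
  obtain ⟨hconv, hdisj, hmax⟩ := hS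
  have hdisj' : ∀ y, y ∈ S → y ∈ (M : Set X) → False := by
    intro y hy hyM
    have : y ∈ S ∩ (M : Set X) := ⟨hy, hyM⟩
    simp [hdisj] at this
  -- M is closed under reflection through a
  have hrefl : ∀ m ∈ (M : Set X), (2:ℝ) • a - m ∈ (M : Set X) := by
    intro m hm
    have h2 := M.smul_vsub_vadd_mem (2:ℝ) ha hm hm
    have he : (2:ℝ) • (a -ᵥ m) +ᵥ m = (2:ℝ) • a - m := by
      simp only [vsub_eq_sub, vadd_eq_add]; module
    rwa [he] at h2
  -- membership characterization for reflection sets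
  have memRefl : ∀ (T : Set X) (x : X),
      x ∈ {z : X | ∃ y ∈ T, z = (2:ℝ) • a - y} ↔ (2:ℝ) • a - x ∈ T := by
    intro T x
    constructor
    · rintro ⟨y, hy, rfl⟩
      have he : (2:ℝ) • a - ((2:ℝ) • a - y) = y := by module
      rwa [he]
    · intro h
      exact ⟨_, h, by module⟩
  have hmemSneg : ∀ x, x ∈ Sneg ↔ (2:ℝ) • a - x ∈ S := by
    intro x; rw [hSneg]; exact memRefl S x
  -- convexity of reflection sets
  have convRefl : ∀ (T : Set X), Convex ℝ T →
      Convex ℝ {z : X | ∃ y ∈ T, z = (2:ℝ) • a - y} := by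
    intro T hT z1 hz1 z2 hz2 b c hb hc hbc
    rw [memRefl] at hz1 hz2 ⊢
    have hc' : c = 1 - b := by linarith
    subst hc'
    have he : (2:ℝ) • a - (b • z1 + (1 - b) • z2)
        = b • ((2:ℝ) • a - z1) + (1 - b) • ((2:ℝ) • a - z2) := by module
    rw [he]
    exact hT hz1 hz2 hb hc hbc
  -- disjointness facts
  have hSnegM : Sneg ∩ (M : Set X) = ∅ := by
    rw [Set.eq_empty_iff_forall_notMem]
    rintro x ⟨hx, hxM⟩
    rw [hmemSneg] at hx
    exact hdisj' _ hx (hrefl x hxM)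
  have hSnegS : Sneg ∩ S = ∅ := by
    rw [Set.eq_empty_iff_forall_notMem]
    rintro x ⟨hx, hxS⟩
    rw [hmemSneg] at hx
    have haS : a ∈ S := by
      have he : a = (1/2 : ℝ) • ((2:ℝ) • a - x) + (1/2 : ℝ) • x := by module
      rw [he]
      exact hconv hx hxS (by norm_num) (by norm_num) (by norm_num)
    exact hdisj' a haS ha
  -- convexity of Sneg
  have hSnegConv : Convex ℝ Sneg := by
    rw [hSneg]; exact convRefl S hconv
  -- maximality of Sneg
  have hmaxneg : ∀ C : Set X, Convex ℝ C → C ∩ (M : Set X) = ∅ → Sneg ⊆ C → C = Sneg := by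
    intro C hC hCM hsub
    have hC'conv := convRefl C hC
    have hC'M : {z : X | ∃ y ∈ C, z = (2:ℝ) • a - y} ∩ (M : Set X) = ∅ := by
      rw [Set.eq_empty_iff_forall_notMem]
      rintro z ⟨hz, hzM⟩
      rw [memRefl] at hz
      have : ((2:ℝ) • a - z) ∈ C ∩ (M : Set X) := ⟨hz, hrefl z hzM⟩
      simp [hCM] at this
    have hSC' : S ⊆ {z : X | ∃ y ∈ C, z = (2:ℝ) • a - y} := by
      intro y hy
      rw [memRefl]
      apply hsub
      rw [hmemSneg]
      have he : (2:ℝ) • a - ((2:ℝ) • a - y) = y := by module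
      rwa [he]
    have hCS := hmax _ hC'conv hC'M hSC'
    ext x
    constructor
    · intro hx
      rw [hmemSneg]
      have : (2:ℝ) • a - x ∈ {z : X | ∃ y ∈ C, z = (2:ℝ) • a - y} := by
        rw [memRefl]
        have he : (2:ℝ) • a - ((2:ℝ) • a - x) = x := by module
        rwa [he]
      rwa [hCS] at this
    · exact fun hx => hsub hx
  -- key lemma: any point outside M ∪ S can be joined to S through M
  have key : ∀ p : X, p ∉ (M : Set X) → p ∉ S →
      ∃ s ∈ S, ∃ u v : ℝ, 0 < u ∧ 0 < v ∧ u + v = 1 ∧ u • p + v • s ∈ (M : Set X) := by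
    intro p hpM hpS
    have hSne : S.Nonempty := by
      rcases Set.eq_empty_or_nonempty S with h | h
      · exfalso
        have := hmax {p} (convex_singleton p)
          (by rw [Set.eq_empty_iff_forall_notMem]; rintro z ⟨hz, hzM⟩
              rw [Set.mem_singleton_iff] at hz; subst hz; exact hpM hzM)
          (by rw [h]; exact Set.empty_subset _)
        rw [h] at this
        exact (Set.singleton_nonempty p).ne_empty this
      · exact h
    set C := convexHull ℝ (insert p S) with hC
    have hSsub : S ⊆ C := (Set.subset_insert p S).trans (subset_convexHull ℝ _)
    have hpC : p ∈ C := subset_convexHull ℝ _ (Set.mem_insert p S)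
    have hCM : ¬ C ∩ (M : Set X) = ∅ := by
      intro hempty
      have := hmax C (convex_convexHull ℝ _) hempty hSsub
      rw [this] at hpC
      exact hpS hpC
    rw [Set.eq_empty_iff_forall_notMem] at hCM
    push_neg at hCM
    obtain ⟨m, hmC, hmM⟩ := hCM
    rw [hC, convexHull_insert hSne, mem_convexJoin] at hmC
    obtain ⟨p', hp', s, hsHull, hm_seg⟩ := hmC
    rw [Set.mem_singleton_iff] at hp'
    subst hp'
    rw [hconv.convexHull_eq] at hsHull
    obtain ⟨u, v, hu, hv, huv, hm_eq⟩ := hm_seg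
    rw [← hm_eq] at hmM
    have hu0 : u ≠ 0 := by
      rintro rfl
      have hv1 : v = 1 := by linarith
      subst hv1
      have : (0:ℝ) • p' + (1:ℝ) • s = s := by module
      rw [this] at hmM
      exact hdisj' s hsHull hmM
    have hv0 : v ≠ 0 := by
      rintro rfl
      have hu1 : u = 1 := by linarith
      subst hu1
      have : (1:ℝ) • p' + (0:ℝ) • s = p' := by module
      rw [this] at hmM
      exact hpM hmM
    exact ⟨s, hsHull, u, v, lt_of_le_of_ne hu (Ne.symm hu0),
      lt_of_le_of_ne hv (Ne.symm hv0), huv, hmM⟩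
  -- the union covers everything
  have hunion : Sneg ∪ (M : Set X) ∪ S = Set.univ := by
    rw [Set.eq_univ_iff_forall]
    intro x
    by_contra hx
    simp only [Set.mem_union, not_or] at hx
    obtain ⟨⟨hxSneg, hxM⟩, hxS⟩ := hx
    have hx'S : (2:ℝ) • a - x ∉ S := fun h => hxSneg ((hmemSneg x).2 h)
    have hx'M : (2:ℝ) • a - x ∉ (M : Set X) := by
      intro h
      have := hrefl _ h
      have he : (2:ℝ) • a - ((2:ℝ) • a - x) = x := by module
      rw [he] at this
      exact hxM this
    obtain ⟨s, hs, u, v, hu, hv, huv, hm⟩ := key x hxM hxS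
    obtain ⟨s', hs', u', v', hu', hv', huv', hm'⟩ := key _ hx'M hx'S
    -- combine the two points of M to produce a point of S ∩ M
    set D : ℝ := v * u' + v' * u with hD
    have hDpos : 0 < D := by positivity
    have hDne : D ≠ 0 := ne_of_gt hDpos
    -- the point q = (v*u'/D) • s + (v'*u/D) • s' lies in S
    have hqS : (v * u' / D) • s + (v' * u / D) • s' ∈ S := by
      apply hconv hs hs'
      · positivity
      · positivity
      · field_simp; exact hD.symm
    -- and q also lies in M
    have hqM : (v * u' / D) • s + (v' * u / D) • s' ∈ (M : Set X) := by
      have hinner := M.smul_vsub_vadd_mem (u / D) hm' ha ha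
      have houter := M.smul_vsub_vadd_mem (u' / D) hm ha hinner
      have he : (u' / D) • ((u • x + v • s) -ᵥ a) +ᵥ
          ((u / D) • ((u' • ((2:ℝ) • a - x) + v' • s') -ᵥ a) +ᵥ a)
          = (v * u' / D) • s + (v' * u / D) • s' := by
        simp only [vsub_eq_sub, vadd_eq_add]
        have hv' : v = 1 - u := by linarith
        have hv'' : v' = 1 - u' := by linarith
        subst hv' hv''
        rw [hD]
        match_scalars <;> field_simp <;> ring
      rwa [he] at houter
    exact hdisj' _ hqS hqM
  exact ⟨⟨hSnegConv, hSnegM, hmaxneg⟩, hunion, hSnegM, hSnegS, by rw [Set.inter_comm]; exact hdisj⟩
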